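/- For every d ∈ L, there exists an L-homogeneous polynomial f ∈ k[X_1, …, X_t] of degree d with f ∉ I if and only if d ∈ L_+. Equivalently, the homogeneous component S_d of the L-graded algebra S(p,λ) = k[X_1, …, X_t]/I is nonzero if and only if d ≥ 0. -/

import Mathlib

open scoped BigOperators

/-- The rank-one abelian group `L(p)`: the quotient of the free abelian group `ℤ^t`
on generators `e 0, …, e (t-1)` by the subgroup generated by the elements
`p i • e i - p 0 • e 0`. -/
abbrev LGrp (t : ℕ) (ht : 0 < t) (p : Fin t → ℕ) : Type :=
  (Fin t → ℤ) ⧸ AddSubgroup.closure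
    (Set.range fun i : Fin t =>
      (p i : ℤ) • Pi.single i (1 : ℤ) - (p ⟨0, ht⟩ : ℤ) • Pi.single ⟨0, ht⟩ (1 : ℤ))

/-- The image `x i` of the generator `e i` in `L(p)`. -/
def xgen (t : ℕ) (ht : 0 < t) (p : Fin t → ℕ) (i : Fin t) : LGrp t ht p :=
  QuotientAddGroup.mk (Pi.single i 1)

/-- The canonical element `c = p 0 • x 0` of `L(p)`. -/
def cElem (t : ℕ) (ht : 0 < t) (p : Fin t → ℕ) : LGrp t ht p :=
  (p ⟨0, ht⟩ : ℤ) • xgen t ht p ⟨0, ht⟩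

/-- The dualizing element `ω = (t - 2) • c - (x 0 + ⋯ + x (t-1))` of `L(p)`. -/
def omegaElem (t : ℕ) (ht : 0 < t) (p : Fin t → ℕ) : LGrp t ht p :=
  ((t : ℤ) - 2) • cElem t ht p - ∑ i, xgen t ht p i

/-- The positive cone `L₊ = {a 0 • x 0 + ⋯ + a (t-1) • x (t-1) : a i ∈ ℕ}`;
`x ≤ y` means `y - x ∈ L₊`. -/
def posCone (t : ℕ) (ht : 0 < t) (p : Fin t → ℕ) : Set (LGrp t ht p) :=
  { y | ∃ a : Fin t → ℕ, y = ∑ i, (a i : ℤ) • xgen t ht p i }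

open MvPolynomial in
/-- The ideal `I` of `k[X 0, …, X (t-1)]` generated by the canonical relations
`X i ^ p i - (X 1 ^ p 1 - λ i * X 0 ^ p 0)` for `2 ≤ i`. -/
noncomputable def canonIdeal (t : ℕ) (ht : 2 ≤ t) (p : Fin t → ℕ) (k : Type) [Field k]
    (lam : Fin t → k) : Ideal (MvPolynomial (Fin t) k) :=
  Ideal.span { f | ∃ i : Fin t, 2 ≤ (i : ℕ) ∧
    f = X i ^ p i -
      (X (⟨1, by omega⟩ : Fin t) ^ p (⟨1, by omega⟩ : Fin t) -
        C (lam i) * X (⟨0, by omega⟩ : Fin t) ^ p (⟨0, by omega⟩ : Fin t)) }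

/-- The weight function assigning to the variable `X i` the degree `x i ∈ L(p)`;
a polynomial is `L`-homogeneous of degree `d` iff it is weighted homogeneous of
degree `d` with respect to these weights. -/
def wtL (t : ℕ) (ht : 2 ≤ t) (p : Fin t → ℕ) : Fin t → LGrp t (by omega) p :=
  xgen t (by omega) p

theorem exists_good_point (t : ℕ) (ht : 2 ≤ t) (p : Fin t → ℕ) (hp : ∀ i, 2 ≤ p i)
    (k : Type) [Field k] [IsAlgClosed k] (lam : Fin t → k) :
    ∃ z : Fin t → k, (∀ i, z i ≠ 0) ∧
      ∀ i : Fin t, 2 ≤ (i : ℕ) →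
        z i ^ p i = z (⟨1, by omega⟩ : Fin t) ^ p (⟨1, by omega⟩ : Fin t)
          - lam i * z (⟨0, by omega⟩ : Fin t) ^ p (⟨0, by omega⟩ : Fin t) := by
  classical
  set i1 : Fin t := ⟨1, by omega⟩ with hi1
  set i0 : Fin t := ⟨0, by omega⟩ with hi0
  have hfin : (insert (0:k) (Set.range lam)).Finite :=
    (Set.finite_range lam).insert 0
  have hB : {u : k | u ^ p i1 ∈ insert (0:k) (Set.range lam)}.Finite := by
    have heq : {u : k | u ^ p i1 ∈ insert (0:k) (Set.range lam)}
        = ⋃ c ∈ insert (0:k) (Set.range lam), {u : k | u ^ p i1 = c} := by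
      ext u; simp [eq_comm]
    rw [heq]
    refine Set.Finite.biUnion hfin fun c _ => ?_
    have hne : (Polynomial.X ^ p i1 - Polynomial.C c : Polynomial k) ≠ 0 :=
      Polynomial.X_pow_sub_C_ne_zero (by have := hp i1; omega) c
    refine (Polynomial.finite_setOf_isRoot hne).subset fun u hu => ?_
    simp only [Set.mem_setOf_eq] at hu ⊢
    simp [Polynomial.IsRoot, hu]
  obtain ⟨u, hu⟩ := (hB.infinite_compl).nonempty
  simp only [Set.mem_compl_iff, Set.mem_setOf_eq, Set.mem_insert_iff, Set.mem_range] at hu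
  push_neg at hu
  obtain ⟨hu0, hul⟩ := hu
  have hz : ∀ i : Fin t, ∃ v : k, ((i : ℕ) = 0 → v = 1) ∧ ((i : ℕ) = 1 → v = u) ∧
      (2 ≤ (i : ℕ) → v ^ p i = u ^ p i1 - lam i ∧ v ≠ 0) := by
    intro i
    rcases Nat.lt_or_ge (i : ℕ) 2 with h2 | h2
    · by_cases h0 : (i : ℕ) = 0
      · exact ⟨1, fun _ => rfl, fun h => absurd h (by omega), fun h => absurd h (by omega)⟩
      · exact ⟨u, fun h => absurd h (by omega), fun _ => rfl, fun h => absurd h (by omega)⟩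
    · obtain ⟨v, hv⟩ := IsAlgClosed.exists_pow_nat_eq (u ^ p i1 - lam i)
        (n := p i) (by have := hp i; omega)
      refine ⟨v, fun h => absurd h (by omega), fun h => absurd h (by omega),
        fun _ => ⟨hv, fun h0 => ?_⟩⟩
      rw [h0, zero_pow (by have := hp i; omega)] at hv
      have hle : lam i = u ^ p i1 := by linear_combination hv
      exact absurd hle (by tauto)
  choose z hz0 hz1 hz2 using hz
  have hzi1 : z i1 = u := hz1 i1 rfl
  have hzi0 : z i0 = 1 := hz0 i0 rfl
  refine ⟨z, fun i => ?_, fun i h2 => ?_⟩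
  · rcases Nat.lt_or_ge (i : ℕ) 2 with h2 | h2
    · by_cases h0 : (i : ℕ) = 0
      · rw [hz0 i h0]; exact one_ne_zero
      · rw [hz1 i (by omega)]
        intro h; rw [h, zero_pow (by have := hp i1; omega)] at hu0; exact hu0 rfl
    · exact (hz2 i h2).2
  · rw [(hz2 i h2).1, hzi1, hzi0, one_pow, mul_one]

/-- the homogeneous component `S_d` of `S(p,λ)` is nonzero iff `d ≥ 0`,
i.e. there is an `L`-homogeneous polynomial of degree `d` not in `I` iff `d ∈ L₊`. -/
theorem homogeneous_component_nonzero_iff (t : ℕ) (ht : 2 ≤ t) (p : Fin t → ℕ) (hp : ∀ i, 2 ≤ p i)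
    (k : Type) [Field k] [IsAlgClosed k] (lam : Fin t → k)
    (hlam0 : ∀ i : Fin t, 2 ≤ (i : ℕ) → lam i ≠ 0)
    (hlam1 : ∀ i j : Fin t, 2 ≤ (i : ℕ) → 2 ≤ (j : ℕ) → i ≠ j → lam i ≠ lam j)
    (d : LGrp t (Nat.lt_of_lt_of_le Nat.zero_lt_two ht) p) :
    (∃ f : MvPolynomial (Fin t) k,
        f.IsWeightedHomogeneous (wtL t ht p) d ∧ f ∉ canonIdeal t ht p k lam)
      ↔ d ∈ posCone t (Nat.lt_of_lt_of_le Nat.zero_lt_two ht) p := by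
  classical
  constructor
  · rintro ⟨f, hf, hfI⟩
    have hf0 : f ≠ 0 := fun h => hfI (h ▸ (canonIdeal t ht p k lam).zero_mem)
    obtain ⟨m, hm⟩ := MvPolynomial.ne_zero_iff.mp hf0
    refine ⟨fun i => m i, ?_⟩
    rw [← hf hm, Finsupp.weight_apply]
    have hst : (m.sum fun i c => c • wtL t ht p i) = ∑ i, (m i) • wtL t ht p i :=
      Finsupp.sum_fintype _ _ (fun i => zero_nsmul _)
    rw [hst]
    refine Finset.sum_congr rfl fun i _ => ?_
    exact (natCast_zsmul (xgen t (Nat.lt_of_lt_of_le Nat.zero_lt_two ht) p i) (m i)).symm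
  · rintro ⟨a, rfl⟩
    obtain ⟨z, hz0, hzrel⟩ := exists_good_point t ht p hp k lam
    refine ⟨MvPolynomial.monomial (Finsupp.equivFunOnFinite.symm a) 1, ?_, ?_⟩
    · apply MvPolynomial.isWeightedHomogeneous_monomial
      rw [Finsupp.weight_apply]
      have hst : ((Finsupp.equivFunOnFinite.symm a).sum fun i c => c • wtL t ht p i)
          = ∑ i, (Finsupp.equivFunOnFinite.symm a i) • wtL t ht p i :=
        Finsupp.sum_fintype _ _ (fun i => zero_nsmul _)
      rw [hst]
      refine Finset.sum_congr rfl fun i _ => ?_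
      simp only [Finsupp.coe_equivFunOnFinite_symm]
      exact (natCast_zsmul (xgen t (Nat.lt_of_lt_of_le Nat.zero_lt_two ht) p i) (a i)).symm
    · intro hmem
      have hker : canonIdeal t ht p k lam ≤ RingHom.ker (MvPolynomial.eval z) := by
        rw [canonIdeal, Ideal.span_le]
        rintro g ⟨i, hi2, rfl⟩
        simp only [SetLike.mem_coe, RingHom.mem_ker, map_sub, map_pow, map_mul,
          MvPolynomial.eval_X, MvPolynomial.eval_C]
        rw [hzrel i hi2]
        ring
      have h0 := hker hmem
      rw [RingHom.mem_ker, MvPolynomial.eval_monomial, one_mul] at h0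
      have hne : ((Finsupp.equivFunOnFinite.symm a).prod fun i e => z i ^ e) ≠ 0 := by
        rw [Finsupp.prod]
        exact Finset.prod_ne_zero_iff.mpr fun i _ => pow_ne_zero _ (hz0 i)
      exact hne h0
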